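/- Let A₀ and A = A₀ + Q be bounded self-adjoint operators on L²(Ω) where Q is multiplication by a bounded function q, and let u(t) = cos(√A t)g and w⁰(t) = (√A₀)⁻¹ sin(√A₀ t) g (assuming A₀ positive definite). Then the Lippmann–Schwinger identity holds: ⟨g, cos(√A₀ t) g⟩ − ⟨g, cos(√A t) g⟩ = ∫₀ᵗ ⟨w⁰(t−s), Q u(s)⟩ ds. -/

import Mathlib

open scoped RealInnerProductSpace
open Matrix

set_option linter.unusedSectionVars false
set_option linter.unusedVariables false

variable {H : Type*} [NormedAddCommGroup H] [InnerProductSpace ℝ H] [CompleteSpace H]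

/-- `cos(√A t)`, realized through the entire power series
`∑ (-1)^k t^(2k) A^k / (2k)!`, which agrees with the continuous functional
calculus applied to `λ ↦ cos (t √λ)` for self-adjoint positive semidefinite `A`. -/
noncomputable def cosSqrt (A : H →L[ℝ] H) (t : ℝ) : H →L[ℝ] H :=
  ∑' k : ℕ, ((-1 : ℝ) ^ k * t ^ (2 * k) / (2 * k).factorial) • A ^ k

/-- `(√A)⁻¹ sin(√A t)`, realized through the entire power series
`∑ (-1)^k t^(2k+1) A^k / (2k+1)!`, agreeing with the functional calculus applied to
`λ ↦ sin(t√λ)/√λ` for self-adjoint positive (semi)definite `A`. -/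
noncomputable def sincSqrt (A : H →L[ℝ] H) (t : ℝ) : H →L[ℝ] H :=
  ∑' k : ℕ, ((-1 : ℝ) ^ k * t ^ (2 * k + 1) / (2 * k + 1).factorial) • A ^ k

namespace LSaux

lemma opnorm_pow_le (A : H →L[ℝ] H) (k : ℕ) : ‖A ^ k‖ ≤ ‖A‖ ^ k := by
  induction k with
  | zero => rw [pow_zero, pow_zero]; exact ContinuousLinearMap.norm_id_le
  | succ k ih =>
    rw [pow_succ, pow_succ]
    exact (norm_mul_le _ _).trans (mul_le_mul ih le_rfl (norm_nonneg _) (by positivity))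

lemma pow_apply_norm_le (A : H →L[ℝ] H) (g : H) (k : ℕ) : ‖(A ^ k) g‖ ≤ ‖A‖ ^ k * ‖g‖ :=
  ((A ^ k).le_opNorm g).trans (mul_le_mul_of_nonneg_right (opnorm_pow_le A k) (norm_nonneg g))

lemma coef_le {R y : ℝ} (hR : 1 ≤ R) (hy : |y| ≤ R) {k n j N : ℕ}
    (hn : n ≤ 4 ^ k) (hj : j ≤ 2 * k) (hN : k ≤ N) :
    (n : ℝ) * |y| ^ j / (N.factorial : ℝ) ≤ (4 * R ^ 2) ^ k / k.factorial := by
  have h1 : (n : ℝ) ≤ (4:ℝ) ^ k := by exact_mod_cast hn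
  have h2 : |y| ^ j ≤ R ^ (2 * k) :=
    (pow_le_pow_left₀ (abs_nonneg y) hy j).trans (pow_le_pow_right₀ hR hj)
  have h3 : (k.factorial : ℝ) ≤ N.factorial := by exact_mod_cast Nat.factorial_le hN
  have h4 : (0:ℝ) < k.factorial := by exact_mod_cast k.factorial_pos
  calc (n:ℝ) * |y| ^ j / N.factorial ≤ (4 ^ k * R ^ (2*k)) / k.factorial :=
        div_le_div₀ (by positivity) (mul_le_mul h1 h2 (by positivity) (by positivity)) h4 h3
    _ = (4*R^2)^k / k.factorial := by rw [mul_pow, pow_mul]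

lemma two_mul_add_one_le (k : ℕ) : 2 * k + 1 ≤ 4 ^ k := by
  induction k with
  | zero => simp
  | succ k ih =>
    have h1 : 1 ≤ 4 ^ k := Nat.one_le_pow _ _ (by norm_num)
    calc 2 * (k + 1) + 1 = (2 * k + 1) + 2 * 1 := by ring
      _ ≤ 4 ^ k + 2 * 4 ^ k := Nat.add_le_add ih (Nat.mul_le_mul_left _ h1)
      _ ≤ 4 ^ (k + 1) := by rw [pow_succ]; omega

-- coefficient abs bounds
lemma abs_c1_le {R y : ℝ} (hR : 1 ≤ R) (hy : |y| ≤ R) (k : ℕ) :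
    |(-1 : ℝ) ^ k * y ^ (2 * k) / (2 * k).factorial| ≤ (4 * R ^ 2) ^ k / k.factorial := by
  have h := coef_le hR hy (k := k) (n := 1) (j := 2 * k) (N := 2 * k)
    (Nat.one_le_pow _ _ (by norm_num)) le_rfl (by omega)
  calc |(-1 : ℝ) ^ k * y ^ (2 * k) / (2 * k).factorial|
      = |y| ^ (2 * k) / ((2 * k).factorial : ℝ) := by
        rw [abs_div, abs_mul, abs_pow, abs_pow, abs_neg, abs_one, one_pow, one_mul, Nat.abs_cast]
    _ ≤ (4 * R ^ 2) ^ k / k.factorial := by simpa using h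

lemma abs_c2_le {R y : ℝ} (hR : 1 ≤ R) (hy : |y| ≤ R) (k : ℕ) :
    |(-1 : ℝ) ^ k * y ^ (2 * k + 1) / (2 * k + 1).factorial| ≤
      R * ((4 * R ^ 2) ^ k / k.factorial) := by
  have h := coef_le hR hy (k := k) (n := 1) (j := 2 * k) (N := 2 * k + 1)
    (Nat.one_le_pow _ _ (by norm_num)) le_rfl (by omega)
  calc |(-1 : ℝ) ^ k * y ^ (2 * k + 1) / (2 * k + 1).factorial|
      = |y| * (|y| ^ (2 * k) / ((2 * k + 1).factorial : ℝ)) := by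
        rw [abs_div, abs_mul, abs_pow, abs_pow, abs_neg, abs_one, one_pow, one_mul, Nat.abs_cast,
          pow_succ]
        ring
    _ ≤ R * ((4 * R ^ 2) ^ k / k.factorial) :=
        mul_le_mul hy (by simpa using h) (by positivity) (le_trans zero_le_one hR)

lemma abs_c3_le {R y : ℝ} (hR : 1 ≤ R) (hy : |y| ≤ R) (k : ℕ) :
    |(-1 : ℝ) ^ k * (((2 * k : ℕ) : ℝ) * y ^ (2 * k - 1)) / (2 * k).factorial| ≤
      (4 * R ^ 2) ^ k / k.factorial := by
  have h := coef_le hR hy (k := k) (n := 2 * k) (j := 2 * k - 1) (N := 2 * k)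
    (le_trans (by omega) (two_mul_add_one_le k)) (by omega) (by omega)
  calc |(-1 : ℝ) ^ k * (((2 * k : ℕ) : ℝ) * y ^ (2 * k - 1)) / (2 * k).factorial|
      = ((2 * k : ℕ) : ℝ) * |y| ^ (2 * k - 1) / ((2 * k).factorial : ℝ) := by
        rw [abs_div, abs_mul, abs_mul, abs_pow, abs_pow, abs_neg, abs_one, one_pow, one_mul,
          Nat.abs_cast, Nat.abs_cast]
    _ ≤ (4 * R ^ 2) ^ k / k.factorial := h

lemma abs_c4_le {R y : ℝ} (hR : 1 ≤ R) (hy : |y| ≤ R) (k : ℕ) :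
    |(-1 : ℝ) ^ k * (((2 * k + 1 : ℕ) : ℝ) * y ^ (2 * k + 1 - 1)) / (2 * k + 1).factorial| ≤
      (4 * R ^ 2) ^ k / k.factorial := by
  have h := coef_le hR hy (k := k) (n := 2 * k + 1) (j := 2 * k + 1 - 1) (N := 2 * k + 1)
    (two_mul_add_one_le k) (by omega) (by omega)
  calc |(-1 : ℝ) ^ k * (((2 * k + 1 : ℕ) : ℝ) * y ^ (2 * k + 1 - 1)) / (2 * k + 1).factorial|
      = ((2 * k + 1 : ℕ) : ℝ) * |y| ^ (2 * k + 1 - 1) / ((2 * k + 1).factorial : ℝ) := by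
        rw [abs_div, abs_mul, abs_mul, abs_pow, abs_pow, abs_neg, abs_one, one_pow, one_mul,
          Nat.abs_cast, Nat.abs_cast]
    _ ≤ (4 * R ^ 2) ^ k / k.factorial := h



lemma summable_master (c d D : ℝ) :
    Summable (fun k : ℕ => (c ^ k / k.factorial) * (d ^ k * D)) :=
  ((Real.summable_pow_div_factorial (c * d)).mul_right D).congr fun k => by
    rw [mul_pow]; ring

lemma smul_norm_le {E : Type*} [SeminormedAddCommGroup E] [NormedSpace ℝ E]
    {a b c : ℝ} {v : E} (ha : |a| ≤ b) (hv : ‖v‖ ≤ c) : ‖a • v‖ ≤ b * c := by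
  rw [norm_smul, Real.norm_eq_abs]
  exact mul_le_mul ha hv (norm_nonneg _) ((abs_nonneg a).trans ha)

lemma summable_cos_op (A : H →L[ℝ] H) (s : ℝ) :
    Summable (fun k : ℕ => ((-1 : ℝ) ^ k * s ^ (2 * k) / (2 * k).factorial) • A ^ k) := by
  set R : ℝ := |s| + 1 with hR
  have h1 : 1 ≤ R := le_add_of_nonneg_left (abs_nonneg s)
  have h2 : |s| ≤ R := by simp [hR]
  refine Summable.of_norm_bounded ((summable_master (4 * R ^ 2) ‖A‖ 1)) fun k => ?_
  simpa using smul_norm_le (abs_c1_le h1 h2 k) ((opnorm_pow_le A k).trans (by simp))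

lemma summable_sinc_op (A : H →L[ℝ] H) (s : ℝ) :
    Summable (fun k : ℕ => ((-1 : ℝ) ^ k * s ^ (2 * k + 1) / (2 * k + 1).factorial) • A ^ k) := by
  set R : ℝ := |s| + 1 with hR
  have h1 : 1 ≤ R := le_add_of_nonneg_left (abs_nonneg s)
  have h2 : |s| ≤ R := by simp [hR]
  refine Summable.of_norm_bounded (((summable_master (4 * R ^ 2) ‖A‖ 1)).mul_left R)
    fun k => ?_
  have := smul_norm_le (abs_c2_le h1 h2 k) ((opnorm_pow_le A k).trans (by simp) :
    ‖A ^ k‖ ≤ ‖A‖ ^ k * 1)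
  calc ‖_ • A ^ k‖ ≤ R * ((4 * R ^ 2) ^ k / k.factorial) * (‖A‖ ^ k * 1) := this
    _ = R * ((4 * R ^ 2) ^ k / ↑k.factorial * (‖A‖ ^ k * 1)) := by ring

lemma summable_cos_vec (A : H →L[ℝ] H) (g : H) (s : ℝ) :
    Summable (fun k : ℕ => ((-1 : ℝ) ^ k * s ^ (2 * k) / (2 * k).factorial) • (A ^ k) g) :=
  (ContinuousLinearMap.apply ℝ H g).summable (summable_cos_op A s) |>.congr fun k => by simp

lemma summable_sinc_vec (A : H →L[ℝ] H) (g : H) (s : ℝ) :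
    Summable (fun k : ℕ => ((-1 : ℝ) ^ k * s ^ (2 * k + 1) / (2 * k + 1).factorial) • (A ^ k) g) :=
  (ContinuousLinearMap.apply ℝ H g).summable (summable_sinc_op A s) |>.congr fun k => by simp

lemma cosSqrt_apply (A : H →L[ℝ] H) (g : H) (s : ℝ) :
    cosSqrt A s g = ∑' k : ℕ, ((-1 : ℝ) ^ k * s ^ (2 * k) / (2 * k).factorial) • (A ^ k) g := by
  have h := (ContinuousLinearMap.apply ℝ H g).map_tsum (summable_cos_op A s)
  simpa [cosSqrt] using h

lemma sincSqrt_apply (A : H →L[ℝ] H) (g : H) (s : ℝ) :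
    sincSqrt A s g
      = ∑' k : ℕ, ((-1 : ℝ) ^ k * s ^ (2 * k + 1) / (2 * k + 1).factorial) • (A ^ k) g := by
  have h := (ContinuousLinearMap.apply ℝ H g).map_tsum (summable_sinc_op A s)
  simpa [sincSqrt] using h

lemma cosSqrt_zero_apply (A : H →L[ℝ] H) (g : H) : cosSqrt A 0 g = g := by
  rw [cosSqrt_apply, tsum_eq_single 0]
  · simp
  · intro b hb
    rw [zero_pow (by omega : 2 * b ≠ 0)]
    simp

lemma sincSqrt_zero_apply (A : H →L[ℝ] H) (g : H) : sincSqrt A 0 g = 0 := by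
  rw [sincSqrt_apply]
  have h : ∀ k : ℕ,
      ((-1 : ℝ) ^ k * (0:ℝ) ^ (2 * k + 1) / (2 * k + 1).factorial) • (A ^ k) g = 0 := by
    intro k
    rw [zero_pow (by omega : 2 * k + 1 ≠ 0)]
    simp
  rw [tsum_congr h, tsum_zero]


theorem hasDerivAt_sincSqrt (A : H →L[ℝ] H) (g : H) (s : ℝ) :
    HasDerivAt (fun r => sincSqrt A r g) (cosSqrt A s g) s := by
  set R : ℝ := |s| + 1 with hRdef
  have hR : 1 ≤ R := le_add_of_nonneg_left (abs_nonneg s)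
  have hR0 : 0 < R := lt_of_lt_of_le one_pos hR
  set f : ℕ → ℝ → H := fun k y =>
    ((-1 : ℝ) ^ k * y ^ (2 * k + 1) / (2 * k + 1).factorial) • (A ^ k) g with hf
  set f' : ℕ → ℝ → H := fun k y =>
    ((-1 : ℝ) ^ k * (((2 * k + 1 : ℕ) : ℝ) * y ^ (2 * k + 1 - 1)) / (2 * k + 1).factorial) •
      (A ^ k) g with hf'
  set u : ℕ → ℝ := fun k => (4 * R ^ 2) ^ k / k.factorial * (‖A‖ ^ k * ‖g‖) with hu
  have hus : Summable u := summable_master _ _ _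
  have hderiv : ∀ (k : ℕ) (y : ℝ), y ∈ Set.Ioo (-R) R → HasDerivAt (f k) (f' k y) y := by
    intro k y _
    exact (((hasDerivAt_pow (2 * k + 1) y).const_mul ((-1 : ℝ) ^ k)).div_const
      ((2 * k + 1).factorial : ℝ)).smul_const ((A ^ k) g)
  have hbound : ∀ (k : ℕ) (y : ℝ), y ∈ Set.Ioo (-R) R → ‖f' k y‖ ≤ u k := by
    intro k y hy
    have hyR : |y| ≤ R := le_of_lt (abs_lt.mpr ⟨hy.1, hy.2⟩)
    exact smul_norm_le (abs_c4_le hR hyR k) (pow_apply_norm_le A g k)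
  have h0 : (0 : ℝ) ∈ Set.Ioo (-R) R := ⟨by linarith, hR0⟩
  have hsum0 : Summable fun k => f k 0 := summable_sinc_vec A g 0
  have hs : s ∈ Set.Ioo (-R) R :=
    ⟨by rw [hRdef]; linarith [neg_abs_le s], by rw [hRdef]; linarith [le_abs_self s]⟩
  have key := hasDerivAt_tsum_of_isPreconnected hus isOpen_Ioo isPreconnected_Ioo
    hderiv hbound h0 hsum0 hs
  have hfun : (fun z => ∑' k, f k z) = fun z => sincSqrt A z g :=
    funext fun z => (sincSqrt_apply A g z).symm
  rw [hfun] at key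
  have hval : ∑' k, f' k s = cosSqrt A s g := by
    rw [cosSqrt_apply]
    refine tsum_congr fun k => ?_
    simp only [hf']
    congr 1
    have hfac : ((2 * k + 1).factorial : ℝ) = ((2 * k + 1 : ℕ) : ℝ) * ((2 * k).factorial : ℝ) := by
      exact_mod_cast congrArg (Nat.cast : ℕ → ℝ) (Nat.factorial_succ (2 * k))
    have hne : ((2 * k + 1 : ℕ) : ℝ) ≠ 0 := by positivity
    have hne2 : ((2 * k).factorial : ℝ) ≠ 0 := by positivity
    rw [Nat.add_sub_cancel, hfac]
    field_simp
  rwa [hval] at key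


theorem hasDerivAt_cosSqrt (A : H →L[ℝ] H) (g : H) (s : ℝ) :
    HasDerivAt (fun r => cosSqrt A r g) (-(A (sincSqrt A s g))) s := by
  set R : ℝ := |s| + 1 with hRdef
  have hR : 1 ≤ R := le_add_of_nonneg_left (abs_nonneg s)
  have hR0 : 0 < R := lt_of_lt_of_le one_pos hR
  set f : ℕ → ℝ → H := fun k y =>
    ((-1 : ℝ) ^ k * y ^ (2 * k) / (2 * k).factorial) • (A ^ k) g with hf
  set f' : ℕ → ℝ → H := fun k y =>
    ((-1 : ℝ) ^ k * (((2 * k : ℕ) : ℝ) * y ^ (2 * k - 1)) / (2 * k).factorial) •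
      (A ^ k) g with hf'
  set u : ℕ → ℝ := fun k => (4 * R ^ 2) ^ k / k.factorial * (‖A‖ ^ k * ‖g‖) with hu
  have hus : Summable u := summable_master _ _ _
  have hderiv : ∀ (k : ℕ) (y : ℝ), y ∈ Set.Ioo (-R) R → HasDerivAt (f k) (f' k y) y := by
    intro k y _
    exact (((hasDerivAt_pow (2 * k) y).const_mul ((-1 : ℝ) ^ k)).div_const
      ((2 * k).factorial : ℝ)).smul_const ((A ^ k) g)
  have hbound : ∀ (k : ℕ) (y : ℝ), y ∈ Set.Ioo (-R) R → ‖f' k y‖ ≤ u k := by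
    intro k y hy
    have hyR : |y| ≤ R := le_of_lt (abs_lt.mpr ⟨hy.1, hy.2⟩)
    exact smul_norm_le (abs_c3_le hR hyR k) (pow_apply_norm_le A g k)
  have h0 : (0 : ℝ) ∈ Set.Ioo (-R) R := ⟨by linarith, hR0⟩
  have hsum0 : Summable fun k => f k 0 := by
    refine Summable.of_norm_bounded hus fun k => ?_
    exact smul_norm_le (abs_c1_le hR (by simp [hRdef]; positivity) k) (pow_apply_norm_le A g k)
  have hs : s ∈ Set.Ioo (-R) R :=
    ⟨by rw [hRdef]; linarith [neg_abs_le s], by rw [hRdef]; linarith [le_abs_self s]⟩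
  have key := hasDerivAt_tsum_of_isPreconnected hus isOpen_Ioo isPreconnected_Ioo
    hderiv hbound h0 hsum0 hs
  have hfun : (fun z => ∑' k, f k z) = fun z => cosSqrt A z g :=
    funext fun z => (cosSqrt_apply A g z).symm
  rw [hfun] at key
  have hsum' : Summable fun k => f' k s := by
    refine Summable.of_norm_bounded hus fun k => ?_
    have hyR : |s| ≤ R := le_of_lt (abs_lt.mpr ⟨hs.1, hs.2⟩)
    exact smul_norm_le (abs_c3_le hR hyR k) (pow_apply_norm_le A g k)
  have hval : ∑' k, f' k s = -(A (sincSqrt A s g)) := by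
    rw [Summable.tsum_eq_zero_add hsum']
    have hzero : f' 0 s = 0 := by simp [hf']
    rw [hzero, zero_add]
    have hterm : ∀ k : ℕ, f' (k + 1) s =
        -(((-1 : ℝ) ^ k * s ^ (2 * k + 1) / (2 * k + 1).factorial) • A ((A ^ k) g)) := by
      intro k
      have he : 2 * (k + 1) - 1 = 2 * k + 1 := by omega
      have he2 : 2 * (k + 1) = (2 * k + 1) + 1 := by omega
      have hfaceq : ((2 * (k + 1)).factorial : ℝ)
          = ((2 * k + 2 : ℕ) : ℝ) * ((2 * k + 1).factorial : ℝ) := by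
        rw [he2]
        exact_mod_cast congrArg (Nat.cast : ℕ → ℝ) (Nat.factorial_succ (2 * k + 1))
      have hApow : (A ^ (k + 1)) g = A ((A ^ k) g) := by
        rw [pow_succ']; rfl
      simp only [hf', hApow, he]
      rw [← neg_smul]
      congr 1
      have hne : ((2 * k + 2 : ℕ) : ℝ) ≠ 0 := by positivity
      have hne2 : ((2 * k + 1).factorial : ℝ) ≠ 0 := by positivity
      rw [hfaceq]
      have hcast : ((2 * (k + 1) : ℕ) : ℝ) = ((2 * k + 2 : ℕ) : ℝ) := by norm_num; ring
      rw [hcast, pow_succ]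
      field_simp
    rw [tsum_congr hterm, tsum_neg]
    congr 1
    have hmap : ∀ k : ℕ, ((-1 : ℝ) ^ k * s ^ (2 * k + 1) / (2 * k + 1).factorial) • A ((A ^ k) g)
        = A (((-1 : ℝ) ^ k * s ^ (2 * k + 1) / (2 * k + 1).factorial) • (A ^ k) g) := by
      intro k; rw [_root_.map_smul]
    rw [tsum_congr hmap, ← A.map_tsum (summable_sinc_vec A g s), ← sincSqrt_apply]
  rwa [hval] at key


end LSaux

open LSaux in
/-- The Lippmann–Schwinger identity:
`⟨g, cos(√A₀ t) g⟩ − ⟨g, cos(√A t) g⟩ = ∫₀ᵗ ⟨w⁰(t−s), Q u(s)⟩ ds` with `A = A₀ + Q`,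
`u(s) = cos(√A s) g` and `w⁰(r) = (√A₀)⁻¹ sin(√A₀ r) g`. -/

theorem lippmann_schwinger_identity (A₀ Q : H →L[ℝ] H)
    (hA₀ : IsSelfAdjoint A₀) (hA₀pos : ∃ c > (0 : ℝ), ∀ x : H, c * ‖x‖ ^ 2 ≤ ⟪x, A₀ x⟫)
    (hQ : IsSelfAdjoint Q) (g : H) (t : ℝ) :
    ⟪g, cosSqrt A₀ t g⟫ - ⟪g, cosSqrt (A₀ + Q) t g⟫ =
      ∫ s in (0 : ℝ)..t, ⟪sincSqrt A₀ (t - s) g, Q (cosSqrt (A₀ + Q) s g)⟫ := by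
  set F : ℝ → ℝ := fun s =>
    ⟪sincSqrt A₀ (t - s) g, (A₀ + Q) (sincSqrt (A₀ + Q) s g)⟫ -
      ⟪cosSqrt A₀ (t - s) g, cosSqrt (A₀ + Q) s g⟫ with hF
  have hw : ∀ s : ℝ, HasDerivAt (fun s' => sincSqrt A₀ (t - s') g)
      (-(cosSqrt A₀ (t - s) g)) s := by
    intro s
    have h := HasDerivAt.scomp s (hasDerivAt_sincSqrt A₀ g (t - s))
      (HasDerivAt.const_sub t (hasDerivAt_id s))
    simpa [Function.comp_def] using h
  have hw' : ∀ s : ℝ, HasDerivAt (fun s' => cosSqrt A₀ (t - s') g)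
      (A₀ (sincSqrt A₀ (t - s) g)) s := by
    intro s
    have h := HasDerivAt.scomp s (hasDerivAt_cosSqrt A₀ g (t - s))
      (HasDerivAt.const_sub t (hasDerivAt_id s))
    simpa [Function.comp_def] using h
  have hu1 : ∀ s : ℝ, HasDerivAt (fun s' => cosSqrt (A₀ + Q) s' g)
      (-((A₀ + Q) (sincSqrt (A₀ + Q) s g))) s := fun s => hasDerivAt_cosSqrt (A₀ + Q) g s
  have hu2 : ∀ s : ℝ, HasDerivAt (fun s' => sincSqrt (A₀ + Q) s' g)
      (cosSqrt (A₀ + Q) s g) s := fun s => hasDerivAt_sincSqrt (A₀ + Q) g s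
  have hu3 : ∀ s : ℝ, HasDerivAt (fun s' => (A₀ + Q) (sincSqrt (A₀ + Q) s' g))
      ((A₀ + Q) (cosSqrt (A₀ + Q) s g)) s := fun s =>
    ((A₀ + Q).hasFDerivAt).comp_hasDerivAt s (hu2 s)
  have hFderiv : ∀ s : ℝ,
      HasDerivAt F ⟪sincSqrt A₀ (t - s) g, Q (cosSqrt (A₀ + Q) s g)⟫ s := by
    intro s
    have h := ((hw s).inner ℝ (hu3 s)).sub ((hw' s).inner ℝ (hu1 s))
    refine h.congr_deriv ?_
    have hsym := hA₀.isSymmetric (sincSqrt A₀ (t - s) g) (cosSqrt (A₀ + Q) s g)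
    simp only [ContinuousLinearMap.coe_coe] at hsym
    simp only [inner_neg_left, inner_neg_right, ContinuousLinearMap.add_apply, inner_add_right]
    linarith [hsym]
  have hcont : Continuous fun s => ⟪sincSqrt A₀ (t - s) g, Q (cosSqrt (A₀ + Q) s g)⟫ := by
    have c1 : Continuous fun s => sincSqrt A₀ (t - s) g :=
      continuous_iff_continuousAt.2 fun s => (hw s).continuousAt
    have c2 : Continuous fun s => cosSqrt (A₀ + Q) s g :=
      continuous_iff_continuousAt.2 fun s => (hu1 s).continuousAt
    exact c1.inner (Q.continuous.comp c2)
  have hint := intervalIntegral.integral_eq_sub_of_hasDerivAt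
    (f := F) (f' := fun s => ⟪sincSqrt A₀ (t - s) g, Q (cosSqrt (A₀ + Q) s g)⟫)
    (fun s _ => hFderiv s) (hcont.intervalIntegrable 0 t)
  rw [hint, hF]
  simp only [sub_zero, sub_self, sincSqrt_zero_apply, cosSqrt_zero_apply, map_zero,
    inner_zero_left, inner_zero_right]
  rw [real_inner_comm (cosSqrt A₀ t g) g]
  ring
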